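/- For every odd positive integer p, the Turán number ex(p+2, B_p) equals (p+1)^2/2. -/

import Mathlib

open SimpleGraph

/-- A graph contains the book `B_p` iff some edge has at least `p` common neighbors. -/
def SimpleGraph.ContainsBook {V : Type*} (G : SimpleGraph V) (p : ℕ) : Prop :=
  ∃ x y, G.Adj x y ∧ p ≤ (G.commonNeighbors x y).ncard

/-- The Turán number `ex(n, B_p)`: the maximum number of edges of a simple graph
on `n` vertices containing no book `B_p`. -/
noncomputable def bookTuranNumber (n p : ℕ) : ℕ :=
  sSup {e : ℕ | ∃ G : SimpleGraph (Fin n), ¬ G.ContainsBook p ∧ G.edgeSet.ncard = e}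

/-- The disjoint union of `m` copies of the complete graph `K_k`. -/
def unionComplete (m k : ℕ) : SimpleGraph (Fin m × Fin k) :=
  SimpleGraph.fromRel fun a b => a.1 = b.1

/-- The join `G ∨ H` of two graphs. -/
def SimpleGraph.join {α β : Type*} (G : SimpleGraph α) (H : SimpleGraph β) :
    SimpleGraph (α ⊕ β) := (Gᶜ ⊕g Hᶜ)ᶜ

/-- A disjoint union of cycles `C_{i 0} + ⋯ + C_{i (t-1)}`. -/
def cycleFamily (t : ℕ) (i : Fin t → ℕ) : SimpleGraph (Σ j : Fin t, Fin (i j)) :=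
  SimpleGraph.fromRel fun a b => ∃ h : a.1 = b.1, (SimpleGraph.cycleGraph (i b.1)).Adj (h ▸ a.2) b.2

/-! ### Auxiliary material -/

open Finset

/-- Edge counts of a graph and its complement add up to `n.choose 2`. -/
private lemma bk_edge_compl_sum {n : ℕ} (G : SimpleGraph (Fin n)) [DecidableRel G.Adj] :
    #G.edgeFinset + #Gᶜ.edgeFinset = n.choose 2 := by
  classical
  have hunion : G.edgeFinset ∪ Gᶜ.edgeFinset = (⊤ : SimpleGraph (Fin n)).edgeFinset := by
    ext e
    refine Sym2.ind (fun a b => ?_) e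
    simp only [Finset.mem_union, SimpleGraph.mem_edgeFinset, SimpleGraph.mem_edgeSet,
      SimpleGraph.compl_adj, SimpleGraph.top_adj]
    constructor
    · rintro (h | ⟨h, -⟩) <;> [exact h.ne; exact h]
    · intro h
      by_cases hadj : G.Adj a b
      · exact Or.inl hadj
      · exact Or.inr ⟨h, hadj⟩
  rw [← card_union_of_disjoint (SimpleGraph.disjoint_edgeFinset.2 disjoint_compl_right),
    hunion, SimpleGraph.card_edgeFinset_top_eq_card_choose_two, Fintype.card_fin]

/-- Upper bound: a `B_p`-free graph on `p+2` vertices has at most `(p+1)^2/2` edges. -/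
private lemma bk_upper {p : ℕ} (hp : 1 ≤ p) (hodd : Odd p)
    (G : SimpleGraph (Fin (p + 2))) [DecidableRel G.Adj]
    (hG : ¬ G.ContainsBook p) : #G.edgeFinset ≤ (p + 1) ^ 2 / 2 := by
  classical
  by_contra hcard
  push_neg at hcard
  obtain ⟨m, hm⟩ := hodd
  have hsum := bk_edge_compl_sum G
  -- arithmetic: the complement has at most m edges
  have hq1 : (p + 1) ^ 2 / 2 = 2 * ((m + 1) * (m + 1)) := by
    have h : (p + 1) ^ 2 = 2 * (2 * ((m + 1) * (m + 1))) := by subst hm; ring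
    rw [h]; omega
  have hq2 : (p + 2).choose 2 = 2 * ((m + 1) * (m + 1)) + (m + 1) := by
    rw [Nat.choose_two_right]
    have h1 : p + 2 - 1 = p + 1 := by omega
    rw [h1]
    have h : (p + 2) * (p + 1) = 2 * (2 * ((m + 1) * (m + 1)) + (m + 1)) := by
      subst hm; ring
    rw [h]; omega
  have hF : #Gᶜ.edgeFinset ≤ m := by
    rw [hq2] at hsum; rw [hq1] at hcard
    generalize (m + 1) * (m + 1) = q at hsum hcard
    omega
  -- the vertices covered by complement edges
  set S : Finset (Fin (p + 2)) := univ.filter (fun v => 0 < Gᶜ.degree v) with hSdef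
  have hScard : #S ≤ 2 * m := by
    calc #S = ∑ _v ∈ S, 1 := by simp
    _ ≤ ∑ v ∈ S, Gᶜ.degree v := by
        refine Finset.sum_le_sum fun v hv => ?_
        exact (Finset.mem_filter.1 hv).2
    _ ≤ ∑ v, Gᶜ.degree v := Finset.sum_le_sum_of_subset (Finset.filter_subset _ _)
    _ = 2 * #Gᶜ.edgeFinset := Gᶜ.sum_degrees_eq_twice_card_edges
    _ ≤ 2 * m := by omega
  have hfull : ∀ v : Fin (p + 2), v ∉ S → ∀ w, w ≠ v → G.Adj v w := by
    intro v hv w hw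
    have hdeg : Gᶜ.degree v = 0 := by
      by_contra h
      exact hv (Finset.mem_filter.2 ⟨Finset.mem_univ _, Nat.pos_of_ne_zero h⟩)
    by_contra hadj
    have : Gᶜ.Adj v w := ⟨hw.symm, hadj⟩
    have := (Gᶜ.degree_pos_iff_exists_adj v).2 ⟨w, this⟩
    omega
  -- find two uncovered vertices
  have hcompl : 1 < #Sᶜ := by
    have : #Sᶜ = Fintype.card (Fin (p + 2)) - #S := Finset.card_compl S
    rw [Fintype.card_fin] at this
    omega
  obtain ⟨x, hx, y, hy, hxy⟩ := Finset.one_lt_card.1 hcompl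
  rw [Finset.mem_compl] at hx hy
  apply hG
  refine ⟨x, y, hfull x hx y (Ne.symm hxy), ?_⟩
  have hcn : G.commonNeighbors x y = ({x, y} : Set (Fin (p + 2)))ᶜ := by
    ext z
    simp only [SimpleGraph.mem_commonNeighbors, Set.mem_compl_iff, Set.mem_insert_iff,
      Set.mem_singleton_iff, not_or]
    constructor
    · rintro ⟨h1, h2⟩
      exact ⟨h1.ne', h2.ne'⟩
    · rintro ⟨h1, h2⟩
      exact ⟨hfull x hx z h1, hfull y hy z h2⟩
  rw [hcn]
  have h2 : ({x, y} : Set (Fin (p + 2))).ncard = 2 := Set.ncard_pair hxy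
  have := Set.ncard_add_ncard_compl ({x, y} : Set (Fin (p + 2)))
  have hcardV : Nat.card (Fin (p + 2)) = p + 2 := by simp
  omega

/-- The extremal graph: complete multipartite with parts `{0,1},…,{p-1,p},{p+1}`. -/
private def bkG (p : ℕ) : SimpleGraph (Fin (p + 2)) where
  Adj x y := x.val / 2 ≠ y.val / 2
  symm := ⟨fun _ _ h => Ne.symm h⟩
  loopless := ⟨fun _ h => h rfl⟩

private instance bkG_dec (p : ℕ) : DecidableRel (bkG p).Adj :=
  fun x y => inferInstanceAs (Decidable (x.val / 2 ≠ y.val / 2))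

private lemma bkG_adj {p : ℕ} (x y : Fin (p + 2)) :
    (bkG p).Adj x y ↔ x.val / 2 ≠ y.val / 2 := Iff.rfl

/-- The extremal graph contains no book. -/
private lemma bkG_noBook {p : ℕ} (hp : 1 ≤ p) (hodd : Odd p) :
    ¬ (bkG p).ContainsBook p := by
  rintro ⟨x, y, hadj, hcard⟩
  rw [bkG_adj] at hadj
  -- a helper: if `x.val < p + 1` then the common neighborhood is small
  have key : ∀ x y : Fin (p + 2), (bkG p).Adj x y → x.val < p + 1 →
      ((bkG p).commonNeighbors x y).ncard ≤ p - 1 := by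
    intro x y hadj hx
    rw [bkG_adj] at hadj
    have hwlt : 2 * (x.val / 2) + 1 - x.val % 2 < p + 2 := by omega
    set w : Fin (p + 2) := ⟨2 * (x.val / 2) + 1 - x.val % 2, hwlt⟩ with hwdef
    have hwv : w.val = 2 * (x.val / 2) + 1 - x.val % 2 := rfl
    have hwx : w.val / 2 = x.val / 2 := by omega
    have hsub : (bkG p).commonNeighbors x y ⊆ ({x, y, w} : Set (Fin (p + 2)))ᶜ := by
      intro z hz
      rw [SimpleGraph.mem_commonNeighbors, bkG_adj, bkG_adj] at hz
      simp only [Set.mem_compl_iff, Set.mem_insert_iff, Set.mem_singleton_iff, not_or]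
      refine ⟨?_, ?_, ?_⟩
      · rintro rfl; exact hz.1 rfl
      · rintro rfl; exact hz.2 rfl
      · rintro rfl; exact hz.1 hwx.symm
    have hle : ((bkG p).commonNeighbors x y).ncard ≤
        (({x, y, w} : Set (Fin (p + 2)))ᶜ).ncard :=
      Set.ncard_le_ncard hsub (Set.toFinite _)
    have hxy : x ≠ y := fun h => hadj (by rw [h])
    have hxw : x ≠ w := by
      intro h
      have : x.val = w.val := by rw [h]
      omega
    have hyw : y ≠ w := by
      intro h
      apply hadj
      rw [← hwx, h]
    have h3 : ({x, y, w} : Set (Fin (p + 2))).ncard = 3 := by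
      rw [Set.ncard_insert_of_notMem (by simp [hxy, hxw]),
        Set.ncard_pair hyw]
    have := Set.ncard_add_ncard_compl ({x, y, w} : Set (Fin (p + 2)))
    have hcardV : Nat.card (Fin (p + 2)) = p + 2 := by simp
    omega
  rcases Nat.lt_or_ge x.val (p + 1) with hx | hx
  · have := key x y (by rw [bkG_adj]; exact hadj) hx
    omega
  · have hxval : x.val = p + 1 := by omega
    have hy : y.val < p + 1 := by
      obtain ⟨m, hm⟩ := hodd
      have := y.isLt
      rcases Nat.lt_or_ge y.val (p + 1) with h | h
      · exact h
      · exfalso; apply hadj; omega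
    have hcn : (bkG p).commonNeighbors x y = (bkG p).commonNeighbors y x :=
      SimpleGraph.commonNeighbors_symm _ _ _
    have := key y x (by rw [bkG_adj]; exact Ne.symm hadj) hy
    rw [hcn] at hcard
    omega

/-- Degrees in the complement of the extremal graph. -/
private lemma bkG_compl_degree {p : ℕ} (hodd : Odd p) (v : Fin (p + 2)) :
    (bkG p)ᶜ.degree v = if v.val = p + 1 then 0 else 1 := by
  classical
  rw [← SimpleGraph.card_neighborFinset_eq_degree, SimpleGraph.neighborFinset_eq_filter]
  split_ifs with hv
  · rw [Finset.card_eq_zero, Finset.filter_eq_empty_iff]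
    intro w _
    rw [SimpleGraph.compl_adj, bkG_adj]
    rintro ⟨hne, heq⟩
    obtain ⟨m, hm⟩ := hodd
    have h1 : v.val ≠ w.val := fun h => hne (Fin.ext h)
    have := w.isLt
    omega
  · have hvlt : v.val < p + 1 := by have := v.isLt; omega
    rw [Finset.card_eq_one]
    refine ⟨⟨2 * (v.val / 2) + 1 - v.val % 2, by omega⟩, ?_⟩
    ext w
    rw [Finset.mem_filter, Finset.mem_singleton, SimpleGraph.compl_adj, bkG_adj]
    constructor
    · rintro ⟨-, hne, heq⟩
      have h1 : v.val ≠ w.val := fun h => hne (Fin.ext h)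
      have h2 : ¬ v.val / 2 ≠ w.val / 2 := heq
      apply Fin.ext
      show w.val = 2 * (v.val / 2) + 1 - v.val % 2
      omega
    · intro h
      have hw : w.val = 2 * (v.val / 2) + 1 - v.val % 2 := by rw [h]
      refine ⟨Finset.mem_univ _, fun hvw => ?_, fun hne => ?_⟩
      · have : v.val = w.val := by rw [hvw]
        omega
      · apply hne
        omega

/-- Edge count of the extremal graph. -/
private lemma bkG_card {p : ℕ} (hp : 1 ≤ p) (hodd : Odd p) :
    #(bkG p).edgeFinset = (p + 1) ^ 2 / 2 := by
  classical
  obtain ⟨m, hm⟩ := hodd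
  have hdegsum : ∑ v, (bkG p)ᶜ.degree v = p + 1 := by
    calc ∑ v, (bkG p)ᶜ.degree v
        = ∑ v : Fin (p + 2), (if v.val = p + 1 then 0 else 1) :=
          Finset.sum_congr rfl fun v _ => bkG_compl_degree ⟨m, hm⟩ v
      _ = ∑ i ∈ Finset.range (p + 2), (if i = p + 1 then 0 else 1) :=
          Fin.sum_univ_eq_sum_range (fun i => if i = p + 1 then 0 else 1) (p + 2)
      _ = p + 1 := by
          rw [Finset.sum_range_succ, if_pos rfl, add_zero]
          rw [Finset.sum_congr rfl (fun i hi => if_neg (by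
            have := Finset.mem_range.1 hi; omega))]
          simp
  have h2F : 2 * #(bkG p)ᶜ.edgeFinset = p + 1 := by
    rw [← (bkG p)ᶜ.sum_degrees_eq_twice_card_edges]; exact hdegsum
  have hsum := bk_edge_compl_sum (bkG p)
  have hq1 : (p + 1) ^ 2 / 2 = 2 * ((m + 1) * (m + 1)) := by
    have h : (p + 1) ^ 2 = 2 * (2 * ((m + 1) * (m + 1))) := by subst hm; ring
    rw [h]; omega
  have hq2 : (p + 2).choose 2 = 2 * ((m + 1) * (m + 1)) + (m + 1) := by
    rw [Nat.choose_two_right]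
    have h1 : p + 2 - 1 = p + 1 := by omega
    rw [h1]
    have h : (p + 2) * (p + 1) = 2 * (2 * ((m + 1) * (m + 1)) + (m + 1)) := by
      subst hm; ring
    rw [h]; omega
  rw [hq1]
  rw [hq2] at hsum
  generalize (m + 1) * (m + 1) = q at hsum ⊢
  omega

theorem stmt4 (p : ℕ) (hp : 1 ≤ p) (hodd : Odd p) :
    bookTuranNumber (p + 2) p = (p + 1) ^ 2 / 2 := by
  classical
  have hmem : (p + 1) ^ 2 / 2 ∈
      {e : ℕ | ∃ G : SimpleGraph (Fin (p + 2)), ¬ G.ContainsBook p ∧ G.edgeSet.ncard = e} := by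
    refine ⟨bkG p, bkG_noBook hp hodd, ?_⟩
    rw [← SimpleGraph.coe_edgeFinset, Set.ncard_coe_finset]
    exact bkG_card hp hodd
  have hub : ∀ e ∈ {e : ℕ | ∃ G : SimpleGraph (Fin (p + 2)),
      ¬ G.ContainsBook p ∧ G.edgeSet.ncard = e}, e ≤ (p + 1) ^ 2 / 2 := by
    rintro e ⟨G, hG, rfl⟩
    have : DecidableRel G.Adj := Classical.decRel _
    rw [← SimpleGraph.coe_edgeFinset, Set.ncard_coe_finset]
    exact bk_upper hp hodd G hG
  exact le_antisymm (csSup_le ⟨_, hmem⟩ hub) (le_csSup ⟨_, hub⟩ hmem)
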